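/- Define ξ_j := 1/(2√|4j²−1|) for j ∈ ℕ (so ξ₀ = 1/2). For all i, j ∈ ℕ, the integral ∫₀¹ P̂_j(c)·(∫₀^c P̂_i(x) dx) dc equals: ξ₀ if i = j = 0; ξ_j if j = i + 1; −ξ_{j+1} if i = j + 1; and 0 in all other cases (in particular it vanishes when i = j ≥ 1 and when |i − j| ≥ 2). -/

import Mathlib

open MeasureTheory Matrix Set

noncomputable def grad {m : ℕ} (f : (Fin m → ℝ) → ℝ) (q : Fin m → ℝ) : Fin m → ℝ :=
  fun i => fderiv ℝ f q (Pi.single i 1)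

noncomputable def gradMat {m ν : ℕ} (g : (Fin m → ℝ) → (Fin ν → ℝ)) (q : Fin m → ℝ) :
    Matrix (Fin m) (Fin ν) ℝ :=
  Matrix.of fun i a => fderiv ℝ (fun x => g x a) q (Pi.single i 1)

noncomputable def hessVec {m ν : ℕ} (g : (Fin m → ℝ) → (Fin ν → ℝ)) (q v w : Fin m → ℝ) :
    Fin ν → ℝ :=
  fun a => fderiv ℝ (fun x => fderiv ℝ (fun y => g y a) x w) q v

noncomputable def lagMult {m ν : ℕ} (M : Matrix (Fin m) (Fin m) ℝ)
    (U : (Fin m → ℝ) → ℝ) (g : (Fin m → ℝ) → (Fin ν → ℝ)) (q p : Fin m → ℝ) : Fin ν → ℝ :=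
  ((gradMat g q)ᵀ * M⁻¹ * gradMat g q)⁻¹ *ᵥ
    (hessVec g q (M⁻¹ *ᵥ p) (M⁻¹ *ᵥ p) - (gradMat g q)ᵀ *ᵥ (M⁻¹ *ᵥ grad U q))

noncomputable def Ham {m : ℕ} (M : Matrix (Fin m) (Fin m) ℝ)
    (U : (Fin m → ℝ) → ℝ) (q p : Fin m → ℝ) : ℝ :=
  (1 / 2) * (p ⬝ᵥ (M⁻¹ *ᵥ p)) + U q

noncomputable def HamHat {m ν : ℕ} (M : Matrix (Fin m) (Fin m) ℝ)
    (U : (Fin m → ℝ) → ℝ) (g : (Fin m → ℝ) → (Fin ν → ℝ))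
    (q p : Fin m → ℝ) (lam : Fin ν → ℝ) : ℝ :=
  Ham M U q p + lam ⬝ᵥ g q

noncomputable def shiftedLegendre (j : ℕ) (x : ℝ) : ℝ :=
  (Real.sqrt (2 * j + 1) / (Nat.factorial j)) * iteratedDeriv j (fun y => (y ^ 2 - y) ^ j) x

noncomputable def xi (j : ℕ) : ℝ := 1 / (2 * Real.sqrt |4 * (j : ℝ) ^ 2 - 1|)

section LegAux
open Polynomial intervalIntegral

noncomputable def Wp (n : ℕ) : ℝ[X] := (X^2 - X)^n

lemma Wp_eq (n : ℕ) : Wp n = (X - C 0)^n * (X - C 1)^n := by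
  have h : (X^2 - X : ℝ[X]) = (X - C 0) * (X - C 1) := by
    simp only [map_zero, _root_.map_one, sub_zero]
    ring
  show ((X:ℝ[X])^2 - X)^n = _
  rw [h]
  exact _root_.mul_pow _ _ n

lemma Wp_monic (n : ℕ) : (Wp n).Monic := by
  rw [Wp_eq]
  exact ((monic_X_sub_C 0).pow n).mul ((monic_X_sub_C 1).pow n)

lemma Wp_natDegree (n : ℕ) : (Wp n).natDegree = 2*n := by
  rw [Wp_eq, natDegree_mul (((monic_X_sub_C (0:ℝ)).pow n).ne_zero)
    (((monic_X_sub_C (1:ℝ)).pow n).ne_zero), natDegree_pow, natDegree_pow,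
    natDegree_X_sub_C, natDegree_X_sub_C]
  ring

lemma Wp_boundary {k n : ℕ} (hk : k < n) (t : ℝ) (ht : t = 0 ∨ t = 1) :
    (derivative^[k] (Wp n)).eval t = 0 := by
  apply Polynomial.isRoot_iterate_derivative_of_lt_rootMultiplicity
  apply lt_of_lt_of_le hk
  rw [Polynomial.le_rootMultiplicity_iff (Wp_monic n).ne_zero]
  rcases ht with h | h <;> rw [h, Wp_eq]
  · exact Dvd.intro _ rfl
  · exact Dvd.intro_left _ rfl

lemma Wp_top (n : ℕ) : derivative^[2*n] (Wp n) = C ((2*n).factorial : ℝ) := by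
  have hd : (derivative^[2*n] (Wp n)).natDegree ≤ 0 := by
    simpa [Wp_natDegree] using natDegree_iterate_derivative (Wp n) (2*n)
  have hc : (Wp n).coeff (2*n) = 1 := by
    have := (Wp_monic n).coeff_natDegree
    rwa [Wp_natDegree] at this
  rw [Polynomial.eq_C_of_natDegree_le_zero hd]
  congr 1
  rw [coeff_iterate_derivative]
  simp [Nat.descFactorial_self, hc]

noncomputable def Lc (j : ℕ) : ℝ := Real.sqrt (2 * (j:ℝ) + 1) / (Nat.factorial j : ℝ)

noncomputable def LegP (j : ℕ) : ℝ[X] := C (Lc j) * derivative^[j] (Wp j)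

noncomputable def LegQ (i : ℕ) : ℝ[X] :=
  if i = 0 then X else C (Lc i) * derivative^[i-1] (Wp i)

lemma Lc_zero : Lc 0 = 1 := by
  simp [Lc]

lemma LegP_zero : LegP 0 = 1 := by
  simp [LegP, Wp, Lc_zero]

lemma LegQ_def (i : ℕ) :
    LegQ i = if i = 0 then X else C (Lc i) * derivative^[i-1] (Wp i) := rfl

lemma derivative_LegQ (i : ℕ) : derivative (LegQ i) = LegP i := by
  cases i with
  | zero => simp [LegQ_def, LegP_zero]
  | succ n =>
    simp only [LegQ_def, LegP, Nat.succ_ne_zero, if_false, Nat.add_sub_cancel,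
      derivative_C_mul, ← Function.iterate_succ_apply' derivative]

lemma LegQ_eval_zero (i : ℕ) : (LegQ i).eval 0 = 0 := by
  cases i with
  | zero => simp [LegQ_def]
  | succ n => simp [LegQ_def, Wp_boundary (Nat.lt_succ_self n) 0 (Or.inl rfl)]

lemma LegQ_eval_one {i : ℕ} (hi : 1 ≤ i) : (LegQ i).eval 1 = 0 := by
  cases i with
  | zero => omega
  | succ n => simp [LegQ_def, Wp_boundary (Nat.lt_succ_self n) 1 (Or.inr rfl)]

lemma LegQ_natDegree (i : ℕ) : (LegQ i).natDegree ≤ i + 1 := by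
  cases i with
  | zero => simpa [LegQ_def] using natDegree_X_le
  | succ n =>
    refine (natDegree_C_mul_le _ _).trans ?_
    refine (natDegree_iterate_derivative _ _).trans ?_
    rw [Wp_natDegree]
    omega

lemma iteratedDeriv_eval (p : ℝ[X]) (n : ℕ) (x : ℝ) :
    iteratedDeriv n (fun y => p.eval y) x = (derivative^[n] p).eval x := by
  induction n generalizing x with
  | zero => simp
  | succ k ih =>
    rw [iteratedDeriv_succ, Function.iterate_succ_apply']
    rw [show deriv (iteratedDeriv k fun y => p.eval y) x
        = deriv (fun y => (derivative^[k] p).eval y) x from by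
      apply Filter.EventuallyEq.deriv_eq
      filter_upwards with y using ih y]
    exact Polynomial.deriv _

lemma shiftedLegendre_eq (j : ℕ) (x : ℝ) : shiftedLegendre j x = (LegP j).eval x := by
  unfold _root_.shiftedLegendre LegP
  rw [show (fun y : ℝ => (y^2 - y)^j) = fun y => (Wp j).eval y from by
    funext y; simp [Wp]]
  rw [iteratedDeriv_eval]
  simp [Lc]

noncomputable def Pint (p : ℝ[X]) : ℝ := ∫ x in (0:ℝ)..1, p.eval x

lemma pintble (p : ℝ[X]) : IntervalIntegrable (fun x => p.eval x) volume (0:ℝ) 1 :=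
  ((Polynomial.continuous p).intervalIntegrable 0 1)

lemma ipp (p q : ℝ[X]) : Pint (p * derivative q) =
    (p*q).eval 1 - (p*q).eval 0 - Pint (derivative p * q) := by
  have h : ∀ x ∈ Set.uIcc (0:ℝ) 1, HasDerivAt (fun y => (p*q).eval y)
      ((derivative p * q + p * derivative q).eval x) x := by
    intro x _
    simpa [Polynomial.derivative_mul] using (p*q).hasDerivAt x
  have := intervalIntegral.integral_eq_sub_of_hasDerivAt h
    ((derivative p * q + p * derivative q).continuous.intervalIntegrable 0 1)
  simp only [Polynomial.eval_add] at this
  rw [intervalIntegral.integral_add ((derivative p * q).continuous.intervalIntegrable 0 1)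
    ((p * derivative q).continuous.intervalIntegrable 0 1)] at this
  unfold Pint
  linarith

lemma key (j : ℕ) (p : ℝ[X]) : ∀ n, n ≤ j →
    Pint (p * derivative^[j] (Wp j)) =
      (-1:ℝ)^n * Pint (derivative^[n] p * derivative^[j-n] (Wp j)) := by
  intro n
  induction n with
  | zero => simp
  | succ m ih =>
    intro hm
    rw [ih (by omega)]
    have hsplit : derivative^[j - m] (Wp j) = derivative (derivative^[j - (m+1)] (Wp j)) := by
      rw [← Function.iterate_succ_apply' derivative]
      congr 1
      omega
    rw [hsplit, ipp]
    have h0 : (derivative^[m] p * derivative^[j - (m+1)] (Wp j)).eval 0 = 0 := by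
      rw [eval_mul, Wp_boundary (by omega) 0 (Or.inl rfl), mul_zero]
    have h1 : (derivative^[m] p * derivative^[j - (m+1)] (Wp j)).eval 1 = 0 := by
      rw [eval_mul, Wp_boundary (by omega) 1 (Or.inr rfl), mul_zero]
    rw [h0, h1, Function.iterate_succ_apply' derivative m p]
    ring

lemma Pint_C_mul (c : ℝ) (p : ℝ[X]) : Pint (C c * p) = c * Pint p := by
  unfold Pint
  simp only [eval_mul, eval_C]
  rw [intervalIntegral.integral_const_mul]

lemma betaP (b a : ℕ) : Pint (X^a * (1 - X)^b) =
    (a.factorial * b.factorial : ℝ) / ((a + b + 1).factorial : ℝ) := by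
  induction b generalizing a with
  | zero =>
    unfold Pint
    simp only [pow_zero, mul_one, eval_pow, eval_X]
    rw [integral_pow]
    rw [Nat.factorial_succ]
    have : ((a+1).factorial : ℝ) ≠ 0 := by positivity
    field_simp
    rw [Nat.factorial_zero, one_pow, zero_pow (Nat.succ_ne_zero a)]
    push_cast
    ring
  | succ b ih =>
    have h := ipp ((1 - X)^(b+1)) ((X:ℝ[X])^(a+1))
    rw [derivative_X_pow] at h
    have hb : ((1 - X)^(b+1) * (X:ℝ[X])^(a+1)).eval 1 = 0 := by simp
    have hb0 : ((1 - X)^(b+1) * (X:ℝ[X])^(a+1)).eval 0 = 0 := by simp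
    rw [hb, hb0] at h
    rw [derivative_pow] at h
    have hd1 : derivative (1 - X : ℝ[X]) = C (-1) := by
      simp [derivative_X]
    rw [hd1] at h
    have e1 : (1 - X)^(b+1) * (C (((a+1 : ℕ)):ℝ) * X^(a+1-1))
        = C (((a+1 : ℕ)):ℝ) * (X^a * (1-X)^(b+1)) := by
      simp only [Nat.add_sub_cancel]
      ring
    have e2 : C (((b+1 : ℕ)):ℝ) * (1 - X)^(b+1-1) * C (-1) * (X:ℝ[X])^(a+1)
        = C (-((b+1 : ℕ)):ℝ) * (X^(a+1) * (1-X)^b) := by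
      simp only [Nat.add_sub_cancel, map_neg, _root_.map_one]
      ring
    rw [e1, e2, Pint_C_mul, Pint_C_mul] at h
    rw [ih (a+1)] at h
    push_cast at h
    have ha : ((a:ℝ)+1) ≠ 0 := by positivity
    have key : Pint (X^a * (1-X)^(b+1))
        = ((b:ℝ)+1) / ((a:ℝ)+1) * ((((a+1).factorial : ℝ) * (b.factorial : ℝ)) / ((a+1+b+1).factorial : ℝ)) := by
      field_simp at h ⊢
      push_cast
      linarith
    rw [key]
    have h1 : ((a:ℕ)+1+b+1 : ℕ) = a + (b+1) + 1 := by omega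
    rw [h1, Nat.factorial_succ (a), Nat.factorial_succ b]
    have hf : ((a + (b+1) + 1).factorial : ℝ) ≠ 0 := by positivity
    have hf2 : ((a.factorial : ℝ)) ≠ 0 := by positivity
    push_cast
    field_simp

lemma Pint_Wp (n : ℕ) : Pint (Wp n) =
    (-1:ℝ)^n * ((n.factorial : ℝ) * (n.factorial : ℝ)) / ((n + n + 1).factorial : ℝ) := by
  have hW : Wp n = C ((-1:ℝ)^n) * (X^n * (1 - X)^n) := by
    rw [Wp, show ((X:ℝ[X])^2 - X) = C (-1) * (X * (1 - X)) from by
      simp only [map_neg, _root_.map_one]; ring]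
    rw [_root_.mul_pow, _root_.mul_pow, ← C_pow]
  rw [hW, Pint_C_mul, betaP]
  ring

lemma LegQ_top (i : ℕ) : derivative^[i+1] (LegQ i) = C (Lc i * ((2*i).factorial : ℝ)) := by
  cases i with
  | zero =>
    simp [LegQ_def, Lc_zero]
  | succ n =>
    rw [LegQ_def]
    simp only [Nat.succ_ne_zero, if_false, Nat.add_sub_cancel]
    rw [Polynomial.iterate_derivative_C_mul]
    rw [← Function.iterate_add_apply derivative (n+1+1) n]
    rw [show n+1+1+n = 2*(n+1) from by omega, Wp_top, ← C_mul]

lemma T_lt {i j : ℕ} (h : i + 2 ≤ j) : Pint (LegQ i * LegP j) = 0 := by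
  rw [LegP, show LegQ i * (C (Lc j) * derivative^[j] (Wp j))
      = C (Lc j) * (LegQ i * derivative^[j] (Wp j)) from by ring]
  rw [Pint_C_mul, key j (LegQ i) (i+2) h]
  rw [Polynomial.iterate_derivative_eq_zero (lt_of_le_of_lt (LegQ_natDegree i) (by omega))]
  simp [Pint]

lemma T_swap (i j : ℕ) : Pint (LegQ i * LegP j)
    = (LegQ i).eval 1 * (LegQ j).eval 1 - Pint (LegQ j * LegP i) := by
  have h := ipp (LegQ i) (LegQ j)
  rw [derivative_LegQ, derivative_LegQ, eval_mul, eval_mul, LegQ_eval_zero,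
    zero_mul, sub_zero, mul_comm (LegP i) (LegQ j)] at h
  exact h

lemma T_succ (i : ℕ) : Pint (LegQ i * LegP (i+1)) = xi (i+1) := by
  rw [LegP, show LegQ i * (C (Lc (i+1)) * derivative^[i+1] (Wp (i+1)))
      = C (Lc (i+1)) * (LegQ i * derivative^[i+1] (Wp (i+1))) from by ring]
  rw [Pint_C_mul, key (i+1) (LegQ i) (i+1) le_rfl, Nat.sub_self,
    Function.iterate_zero_apply, LegQ_top, Pint_C_mul, Pint_Wp]
  -- arithmetic
  have hfac : ((i+1+(i+1)+1).factorial : ℝ)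
      = (2*(i:ℝ)+3) * ((2*(i:ℝ)+2) * ((2*(i:ℝ)+1) * ((2*i).factorial : ℝ))) := by
    rw [show i+1+(i+1)+1 = (2*i+2)+1 from by omega, Nat.factorial_succ,
      Nat.factorial_succ, Nat.factorial_succ]
    push_cast
    ring
  have hfac2 : (((i:ℕ)+1).factorial : ℝ) = ((i:ℝ)+1) * (i.factorial : ℝ) := by
    rw [Nat.factorial_succ]
    push_cast
    ring
  have hsgn : ((-1:ℝ)^(i+1)) * ((-1:ℝ)^(i+1)) = 1 := by
    rw [← _root_.pow_add]
    rw [show i+1+(i+1) = 2*(i+1) from by omega, _root_.pow_mul]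
    norm_num
  have habs : |4 * ((i:ℝ)+1)^2 - 1| = (2*(i:ℝ)+1) * (2*(i:ℝ)+3) := by
    rw [abs_of_nonneg (by nlinarith)]
    ring
  have hs : Real.sqrt ((2*(i:ℝ)+1) * (2*(i:ℝ)+3))
      = Real.sqrt (2*(i:ℝ)+1) * Real.sqrt (2*(i:ℝ)+3) := by
    rw [Real.sqrt_mul (by positivity)]
  have hxi : xi (i+1) = 1 / (2 * (Real.sqrt (2*(i:ℝ)+1) * Real.sqrt (2*(i:ℝ)+3))) := by
    rw [xi, show 4 * (((i:ℕ)+1 : ℕ):ℝ)^2 - 1 = 4 * ((i:ℝ)+1)^2 - 1 from by push_cast; ring,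
      habs, hs]
  rw [hxi, hfac, hfac2, Lc, Lc]
  rw [show 2 * (((i:ℕ)+1:ℕ):ℝ) + 1 = 2*(i:ℝ)+3 from by push_cast; ring]
  have hs1 : Real.sqrt (2*(i:ℝ)+1) * Real.sqrt (2*(i:ℝ)+1) = 2*(i:ℝ)+1 :=
    Real.mul_self_sqrt (by positivity)
  have hs3 : Real.sqrt (2*(i:ℝ)+3) * Real.sqrt (2*(i:ℝ)+3) = 2*(i:ℝ)+3 :=
    Real.mul_self_sqrt (by positivity)
  have hs1p : (0:ℝ) < Real.sqrt (2*(i:ℝ)+1) := Real.sqrt_pos.mpr (by positivity)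
  have hs3p : (0:ℝ) < Real.sqrt (2*(i:ℝ)+3) := Real.sqrt_pos.mpr (by positivity)
  have hfi : (0:ℝ) < (i.factorial : ℝ) := by positivity
  have hf2i : (0:ℝ) < ((2*i).factorial : ℝ) := by positivity
  rcases Nat.even_or_odd (i+1) with hpar | hpar
  · rw [hpar.neg_one_pow]
    rw [eq_div_iff (by positivity)]
    field_simp
    ring_nf
    rw [Real.sq_sqrt (by positivity : (0:ℝ) ≤ 1+(i:ℝ)*2),
      Real.sq_sqrt (by positivity : (0:ℝ) ≤ 3+(i:ℝ)*2),
      show (1+i) = i+1 from by omega, Nat.factorial_succ]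
    push_cast
    ring
  · rw [hpar.neg_one_pow]
    rw [eq_div_iff (by positivity)]
    field_simp
    ring_nf
    rw [Real.sq_sqrt (by positivity : (0:ℝ) ≤ 1+(i:ℝ)*2),
      Real.sq_sqrt (by positivity : (0:ℝ) ≤ 3+(i:ℝ)*2),
      show (1+i) = i+1 from by omega, Nat.factorial_succ]
    push_cast
    ring

lemma shiftedLegendre_cont (i : ℕ) : Continuous (fun x => shiftedLegendre i x) := by
  have : (fun x => shiftedLegendre i x) = fun x => (LegP i).eval x := by
    funext x
    exact shiftedLegendre_eq i x
  rw [this]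
  exact (LegP i).continuous

lemma inner_int (i : ℕ) (c : ℝ) :
    (∫ x in (0:ℝ)..c, shiftedLegendre i x) = (LegQ i).eval c := by
  have h : ∀ x ∈ Set.uIcc (0:ℝ) c, HasDerivAt (fun y => (LegQ i).eval y) (shiftedLegendre i x) x := by
    intro x _
    rw [shiftedLegendre_eq, ← derivative_LegQ]
    exact (LegQ i).hasDerivAt x
  rw [intervalIntegral.integral_eq_sub_of_hasDerivAt h
    ((shiftedLegendre_cont i).intervalIntegrable 0 c), LegQ_eval_zero, sub_zero]

lemma outer_int (i j : ℕ) :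
    (∫ c in (0:ℝ)..1, shiftedLegendre j c * ∫ x in (0:ℝ)..c, shiftedLegendre i x)
      = Pint (LegQ i * LegP j) := by
  unfold Pint
  apply intervalIntegral.integral_congr
  intro c _
  show shiftedLegendre j c * (∫ x in (0:ℝ)..c, shiftedLegendre i x) = (LegQ i * LegP j).eval c
  rw [inner_int, shiftedLegendre_eq, eval_mul]
  ring

end LegAux

open Polynomial intervalIntegral in
theorem stmt5 (i j : ℕ) :
    (∫ c in (0:ℝ)..1, shiftedLegendre j c * ∫ x in (0:ℝ)..c, shiftedLegendre i x) =
      if j = 0 ∧ i = 0 then xi 0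
      else if j = i + 1 then xi j
      else if i = j + 1 then -xi (j + 1)
      else 0 := by
  rw [outer_int]
  by_cases h00 : j = 0 ∧ i = 0
  · rw [if_pos h00]
    obtain ⟨hj, hi⟩ := h00
    subst hj hi
    rw [LegP_zero, mul_one, show LegQ 0 = X from rfl]
    unfold Pint
    simp only [eval_X]
    rw [integral_id]
    rw [xi]
    norm_num
  · rw [if_neg h00]
    by_cases hji : j = i + 1
    · rw [if_pos hji]
      subst hji
      exact T_succ i
    · rw [if_neg hji]
      by_cases hij : i = j + 1
      · rw [if_pos hij]
        subst hij
        rw [T_swap, T_succ, LegQ_eval_one (by omega), zero_mul, zero_sub]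
      · rw [if_neg hij]
        -- remaining: i = j (≥ 1 handled, both 0 excluded), or |i - j| ≥ 2
        rcases Nat.lt_trichotomy i j with hlt | heq | hgt
        · exact T_lt (by omega)
        · subst heq
          have hi1 : 1 ≤ i := by
            rcases Nat.eq_zero_or_pos i with h0 | h0
            · exact absurd ⟨h0, h0⟩ h00
            · exact h0
          have h := T_swap i i
          rw [LegQ_eval_one hi1, zero_mul, zero_sub] at h
          linarith
        · rw [T_swap, T_lt (by omega), LegQ_eval_one (by omega), zero_mul, zero_sub, neg_zero]
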